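/- If two rooted binary phylogenetic trees T₁, T₂ on leaf set [n] both restrict to rooted caterpillars on a common subset S' of leaves, then MAST(T₁, T₂) is at least the length of the longest increasing subsequence of the permutation of S' obtained by reading the leaf order of T₂|_{S'} relative to the leaf order of T₁|_{S'}. -/

import Mathlib

/-- Plane (ordered) rooted binary trees with leaves labelled by `α`. -/
inductive RTree (α : Type) : Type
  | leaf : α → RTree α
  | node : RTree α → RTree α → RTree α

namespace RTree

/-- The multiset of leaf labels of a tree. -/
def labels {α : Type} : RTree α → Multiset α
  | .leaf a => {a}
  | .node l r => labels l + labels r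

/-- Relabelling of leaves. -/
def map {α β : Type} (f : α → β) : RTree α → RTree β
  | .leaf a => .leaf (f a)
  | .node l r => .node (map f l) (map f r)

/-- Two plane trees represent the same rooted binary phylogenetic tree
(equality up to swapping the two children at internal vertices). -/
inductive Iso {α : Type} : RTree α → RTree α → Prop
  | leaf (a : α) : Iso (.leaf a) (.leaf a)
  | node {l₁ r₁ l₂ r₂ : RTree α} : Iso l₁ l₂ → Iso r₁ r₂ →
      Iso (.node l₁ r₁) (.node l₂ r₂)
  | swap {l₁ r₁ l₂ r₂ : RTree α} : Iso l₁ l₂ → Iso r₁ r₂ →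
      Iso (.node l₁ r₁) (.node r₂ l₂)

theorem Iso.labels_eq {α : Type} {t₁ t₂ : RTree α} (h : Iso t₁ t₂) :
    t₁.labels = t₂.labels := by
  induction h with
  | leaf a => rfl
  | node _ _ ih₁ ih₂ => simp [labels, ih₁, ih₂]
  | swap _ _ ih₁ ih₂ => simp [labels, ih₁, ih₂, add_comm]

/-- Restriction of a tree to the leaves in `S`, suppressing degree-two
vertices (`none` if no leaf of the tree lies in `S`). -/
def restrict {α : Type} [DecidableEq α] (S : Finset α) :
    RTree α → Option (RTree α)
  | .leaf a => if a ∈ S then some (.leaf a) else none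
  | .node l r =>
    match restrict S l, restrict S r with
    | some l', some r' => some (.node l' r')
    | some l', none => some l'
    | none, o => o

end RTree

/-- Equality of optional trees as phylogenetic trees. -/
def OptIso {α : Type} : Option (RTree α) → Option (RTree α) → Prop
  | some t₁, some t₂ => RTree.Iso t₁ t₂
  | none, none => True
  | _, _ => False

/-- Rooted binary phylogenetic trees: plane trees up to swapping children. -/
def QTree (α : Type) : Type := Quot (@RTree.Iso α)

/-- Leaf labels of an equivalence class of plane trees. -/
def QTree.labels {α : Type} : QTree α → Multiset α :=
  Quot.lift RTree.labels fun _ _ h => h.labels_eq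

/-- The set of rooted binary phylogenetic trees with leaf label set `{1,…,n}`
(each label used exactly once). -/
def RB (n : ℕ) : Type :=
  {T : QTree (Fin n) // T.labels = (Finset.univ : Finset (Fin n)).val}

/-- `T'` is obtained from `T` by permuting the leaf labels by `π`. -/
def IsRelabel (n : ℕ) (π : Equiv.Perm (Fin n)) (T T' : QTree (Fin n)) : Prop :=
  ∃ t : RTree (Fin n), Quot.mk _ t = T ∧ Quot.mk _ (t.map π) = T'

namespace RTree

/-- A rooted caterpillar: the internal vertices form a path with the root at
one end, i.e. at every internal vertex at least one child is a leaf. -/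
def IsCaterpillar {α : Type} : RTree α → Prop
  | .leaf _ => True
  | .node (.leaf _) r => IsCaterpillar r
  | .node l (.leaf _) => IsCaterpillar l
  | .node _ _ => False

/-- The leaves of a caterpillar listed in order of distance from the root
(with a choice made for the bottom cherry); junk value `[]` on
non-caterpillars. -/
def spineList {α : Type} : RTree α → List α
  | .leaf a => [a]
  | .node (.leaf a) r => a :: spineList r
  | .node l (.leaf a) => a :: spineList l
  | .node _ _ => []

end RTree

namespace RTree

-- auxiliary lemmas
theorem Iso.rfl {α : Type} (t : RTree α) : Iso t t := by
  induction t with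
  | leaf a => exact .leaf a
  | node l r ihl ihr => exact .node ihl ihr

theorem Iso.symm' {α : Type} {t₁ t₂ : RTree α} (h : Iso t₁ t₂) : Iso t₂ t₁ := by
  induction h with
  | leaf a => exact .leaf a
  | node _ _ ih1 ih2 => exact .node ih1 ih2
  | swap _ _ ih1 ih2 => exact .swap ih2 ih1

theorem Iso.trans' {α : Type} {t₁ t₂ t₃ : RTree α} (h : Iso t₁ t₂) (h' : Iso t₂ t₃) :
    Iso t₁ t₃ := by
  induction h generalizing t₃ with
  | leaf a => exact h'
  | node h1 h2 ih1 ih2 =>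
    cases h' with
    | node g1 g2 => exact .node (ih1 g1) (ih2 g2)
    | swap g1 g2 => exact .swap (ih1 g1) (ih2 g2)
  | swap h1 h2 ih1 ih2 =>
    cases h' with
    | node g1 g2 => exact .swap (ih1 g2) (ih2 g1)
    | swap g1 g2 => exact .node (ih1 g2) (ih2 g1)

theorem spine_ne_nil {α : Type} : ∀ {c : RTree α}, c.IsCaterpillar → c.spineList ≠ []
  | .leaf a, _ => by simp [spineList]
  | .node (.leaf a) r, _ => by simp [spineList]
  | .node (.node ll lr) (.leaf a), _ => by simp [spineList]
  | .node (.node ll lr) (.node rl rr), h => by simp [IsCaterpillar] at h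

theorem spine_coe {α : Type} : ∀ {c : RTree α}, c.IsCaterpillar →
    (c.spineList : Multiset α) = c.labels
  | .leaf a, _ => by simp [spineList, labels]
  | .node (.leaf a) r, h => by
    simp only [IsCaterpillar] at h
    simp [spineList, labels, ← spine_coe h, Multiset.cons_coe, Multiset.singleton_add]
  | .node (.node ll lr) (.leaf a), h => by
    simp only [IsCaterpillar] at h
    have := spine_coe h
    rw [labels] at this
    calc (↑(a :: (RTree.node ll lr).spineList) : Multiset α)
        = {a} + ↑(RTree.node ll lr).spineList := by
          simp [Multiset.cons_coe, Multiset.singleton_add]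
      _ = ll.labels + lr.labels + {a} := by rw [this, add_comm]
  | .node (.node ll lr) (.node rl rr), h => by simp [IsCaterpillar] at h

theorem iso_of_spineList_eq {α : Type} : ∀ {c c' : RTree α}, c.IsCaterpillar →
    c'.IsCaterpillar → c.spineList = c'.spineList → Iso c c'
  | .leaf a, .leaf b, _, _, h => by
    simp [spineList] at h; subst h; exact .leaf a
  | .leaf a, .node (.leaf b) r', _, h', h => by
    simp [spineList] at h
    exact absurd h.2 (spine_ne_nil (by simpa [IsCaterpillar] using h'))
  | .leaf a, .node (.node l1 l2) (.leaf b), _, h', h => by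
    simp [spineList] at h
    exact absurd h.2 (spine_ne_nil (by simpa [IsCaterpillar] using h'))
  | .leaf a, .node (.node _ _) (.node _ _), _, h', h => by simp [IsCaterpillar] at h'
  | .node (.leaf a) r, .leaf b, hc, _, h => by
    simp [spineList] at h
    exact absurd h.2 (spine_ne_nil (by simpa [IsCaterpillar] using hc))
  | .node (.node _ _) (.leaf a), .leaf b, hc, _, h => by
    simp [spineList] at h
    exact absurd h.2 (spine_ne_nil (by simpa [IsCaterpillar] using hc))
  | .node (.node _ _) (.node _ _), _, hc, _, _ => by simp [IsCaterpillar] at hc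
  | _, .node (.node _ _) (.node _ _), _, h', _ => by simp [IsCaterpillar] at h'
  | .node (.leaf a) r, .node (.leaf b) r', hc, h', h => by
    simp only [IsCaterpillar] at hc h'
    simp only [spineList, List.cons.injEq] at h
    obtain ⟨rfl, h2⟩ := h
    exact .node (.leaf a) (iso_of_spineList_eq hc h' h2)
  | .node (.leaf a) r, .node (.node m1 m2) (.leaf b), hc, h', h => by
    simp only [IsCaterpillar] at hc h'
    simp only [spineList, List.cons.injEq] at h
    obtain ⟨rfl, h2⟩ := h
    exact .swap (.leaf a) (iso_of_spineList_eq hc h' h2)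
  | .node (.node m1 m2) (.leaf a), .node (.leaf b) r', hc, h', h => by
    simp only [IsCaterpillar] at hc h'
    simp only [spineList, List.cons.injEq] at h
    obtain ⟨rfl, h2⟩ := h
    exact .swap (iso_of_spineList_eq hc h' h2) (.leaf a)
  | .node (.node m1 m2) (.leaf a), .node (.node m3 m4) (.leaf b), hc, h', h => by
    simp only [IsCaterpillar] at hc h'
    simp only [spineList, List.cons.injEq] at h
    obtain ⟨rfl, h2⟩ := h
    exact .node (iso_of_spineList_eq hc h' h2) (.leaf a)

theorem restrict_node {α : Type} [DecidableEq α] (S : Finset α) (l r : RTree α) :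
    restrict S (.node l r) = match restrict S l, restrict S r with
      | some l', some r' => some (.node l' r')
      | some l', none => some l'
      | none, o => o := rfl

theorem restrict_spec {α : Type} [DecidableEq α] (S : Finset α) : ∀ (t : RTree α),
    (t.restrict S = none → t.labels.filter (· ∈ S) = 0) ∧
    (∀ t', t.restrict S = some t' → t'.labels = t.labels.filter (· ∈ S))
  | .leaf a => by
    by_cases h : a ∈ S <;>
      simp [restrict, labels, h, Multiset.filter_singleton]
  | .node l r => by
    obtain ⟨hln, hls⟩ := restrict_spec S l
    obtain ⟨hrn, hrs⟩ := restrict_spec S r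
    cases hl : l.restrict S with
    | none =>
      cases hr : r.restrict S with
      | none =>
        constructor
        · intro _
          simp [labels, Multiset.filter_add, hln hl, hrn hr]
        · intro t' ht'
          simp [restrict, hl, hr] at ht'
      | some r' =>
        constructor
        · intro hn; simp [restrict, hl, hr] at hn
        · intro t' ht'
          simp only [restrict, hl, hr, Option.some.injEq] at ht'
          subst ht'
          simp [labels, Multiset.filter_add, hln hl, hrs r' hr]
    | some l' =>
      cases hr : r.restrict S with
      | none =>
        constructor
        · intro hn; simp [restrict, hl, hr] at hn
        · intro t' ht'
          simp only [restrict, hl, hr, Option.some.injEq] at ht'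
          subst ht'
          simp [labels, Multiset.filter_add, hrn hr, hls l' hl]
      | some r' =>
        constructor
        · intro hn; simp [restrict, hl, hr] at hn
        · intro t' ht'
          simp only [restrict, hl, hr, Option.some.injEq] at ht'
          subst ht'
          simp [labels, Multiset.filter_add, hls l' hl, hrs r' hr]

theorem restrict_restrict {α : Type} [DecidableEq α] {S S' : Finset α} (h : S ⊆ S') :
    ∀ t : RTree α, (t.restrict S').bind (restrict S) = t.restrict S
  | .leaf a => by
    by_cases ha : a ∈ S
    · simp [restrict, ha, h ha]
    · by_cases ha' : a ∈ S' <;> simp [restrict, ha, ha']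
  | .node l r => by
    have ihl := restrict_restrict h l
    have ihr := restrict_restrict h r
    cases hl : l.restrict S' with
    | none =>
      rw [hl] at ihl
      simp only [Option.bind] at ihl
      cases hr : r.restrict S' with
      | none =>
        rw [hr] at ihr; simp only [Option.bind] at ihr
        simp [restrict, hl, hr, ← ihl, ← ihr]
      | some r' =>
        rw [hr] at ihr; simp only [Option.bind] at ihr
        simp [restrict, hl, hr, ← ihl, ← ihr]
    | some l' =>
      rw [hl] at ihl; simp only [Option.bind] at ihl
      cases hr : r.restrict S' with
      | none =>
        rw [hr] at ihr; simp only [Option.bind] at ihr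
        simp only [restrict, hl, hr, ← ihl, ← ihr, Option.bind_some]
        cases l'.restrict S <;> rfl
      | some r' =>
        rw [hr] at ihr; simp only [Option.bind] at ihr
        simp only [restrict, hl, hr, ← ihl, ← ihr, Option.bind_some]

theorem restrict_cat {α : Type} [DecidableEq α] (S : Finset α) :
    ∀ {c : RTree α}, c.IsCaterpillar →
    (c.restrict S = none → c.spineList.filter (· ∈ S) = []) ∧
    (∀ c', c.restrict S = some c' → ∃ c'', Iso c' c'' ∧ c''.IsCaterpillar ∧
      c''.spineList = c.spineList.filter (· ∈ S))
  | .leaf a, _ => by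
    by_cases h : a ∈ S
    · refine ⟨by simp [restrict, h], fun c' hc' => ?_⟩
      simp only [restrict, if_pos h, Option.some.injEq] at hc'
      subst hc'
      exact ⟨.leaf a, .leaf a, trivial, by simp [spineList, h]⟩
    · exact ⟨fun _ => by simp [spineList, h], fun c' hc' => by simp [restrict, h] at hc'⟩
  | .node (.leaf a) r, hc => by
    simp only [IsCaterpillar] at hc
    obtain ⟨ihn, ihs⟩ := restrict_cat S hc
    by_cases ha : a ∈ S
    · cases hr : r.restrict S with
      | none =>
        refine ⟨fun hn => by simp [restrict, ha, hr] at hn, fun c' hc' => ?_⟩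
        simp only [restrict, if_pos ha, hr, Option.some.injEq] at hc'
        subst hc'
        exact ⟨.leaf a, .leaf a, trivial, by simp [spineList, ha, ihn hr]⟩
      | some r' =>
        refine ⟨fun hn => by simp [restrict, ha, hr] at hn, fun c' hc' => ?_⟩
        simp only [restrict, if_pos ha, hr, Option.some.injEq] at hc'
        subst hc'
        obtain ⟨r'', hiso, hcat, hsp⟩ := ihs r' hr
        refine ⟨.node (.leaf a) r'', .node (.leaf a) hiso,
          by simp only [IsCaterpillar]; exact hcat, ?_⟩
        simp [spineList, ha, hsp]
    · constructor
      · intro hn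
        simp only [restrict, if_neg ha] at hn
        cases hr : r.restrict S with
        | none => simp [spineList, ha, ihn hr]
        | some r' => rw [hr] at hn; simp at hn
      · intro c' hc'
        simp only [restrict, if_neg ha] at hc'
        cases hr : r.restrict S with
        | none => rw [hr] at hc'; simp at hc'
        | some r' =>
          rw [hr] at hc'
          simp only [Option.some.injEq] at hc'
          subst hc'
          obtain ⟨r'', hiso, hcat, hsp⟩ := ihs r' hr
          exact ⟨r'', hiso, hcat, by simp [spineList, ha, hsp]⟩
  | .node (.node m1 m2) (.leaf a), hc => by
    simp only [IsCaterpillar] at hc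
    obtain ⟨ihn, ihs⟩ := restrict_cat S hc
    by_cases ha : a ∈ S
    · cases hl : (RTree.node m1 m2).restrict S with
      | none =>
        refine ⟨fun hn => ?_, fun c' hc' => ?_⟩
        · rw [restrict_node, hl] at hn; simp [restrict, ha] at hn
        · rw [restrict_node, hl] at hc'
          simp only [restrict, if_pos ha, Option.some.injEq] at hc'
          subst hc'
          exact ⟨.leaf a, .leaf a, trivial, by simp [spineList, ha, ihn hl]⟩
      | some l' =>
        refine ⟨fun hn => ?_, fun c' hc' => ?_⟩
        · rw [restrict_node, hl] at hn; simp [restrict, ha] at hn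
        · rw [restrict_node, hl] at hc'
          simp only [restrict, if_pos ha, Option.some.injEq] at hc'
          subst hc'
          obtain ⟨l'', hiso, hcat, hsp⟩ := ihs l' hl
          refine ⟨.node (.leaf a) l'', .swap hiso (.leaf a),
            by simp only [IsCaterpillar]; exact hcat, ?_⟩
          simp [spineList, ha, hsp]
    · constructor
      · intro hn
        rw [restrict_node] at hn
        cases hl : (RTree.node m1 m2).restrict S with
        | none => simp [spineList, ha, ihn hl]
        | some l' => rw [hl] at hn; simp [restrict, ha] at hn
      · intro c' hc'
        rw [restrict_node] at hc'
        cases hl : (RTree.node m1 m2).restrict S with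
        | none => rw [hl] at hc'; simp [restrict, ha] at hc'
        | some l' =>
          rw [hl] at hc'
          simp only [restrict, if_neg ha, Option.some.injEq] at hc'
          subst hc'
          obtain ⟨l'', hiso, hcat, hsp⟩ := ihs l' hl
          exact ⟨l'', hiso, hcat, by simp [spineList, ha, hsp]⟩
  | .node (.node _ _) (.node _ _), hc => by simp [IsCaterpillar] at hc

end RTree

theorem aux_pairwise_indexOf {α : Type} [DecidableEq α] {L : List α} (h : L.Nodup) :
    L.Pairwise (fun x y => L.idxOf x < L.idxOf y) := by
  rw [List.pairwise_iff_getElem]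
  intro i j hi hj hij
  simpa [List.Nodup.idxOf_getElem h] using hij

theorem aux_filter_eq {α : Type} [DecidableEq α] {L u : List α} (hL : L.Nodup)
    (hu : u.Nodup) (hmem : ∀ x ∈ u, x ∈ L)
    (hsort : u.Pairwise (fun x y => L.idxOf x < L.idxOf y)) :
    L.filter (· ∈ u.toFinset) = u := by
  have hf : (L.filter (· ∈ u.toFinset)).Nodup := hL.filter _
  have hperm : (L.filter (· ∈ u.toFinset)).Perm u := by
    apply List.perm_of_nodup_nodup_toFinset_eq hf hu
    ext x
    simp only [List.toFinset_filter, Finset.mem_filter, List.mem_toFinset, decide_eq_true_eq]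
    exact ⟨fun h => h.2, fun h => ⟨hmem x h, h⟩⟩
  haveI : IsAntisymm α (fun x y => L.idxOf x < L.idxOf y) :=
    ⟨fun a b h1 h2 => absurd h2 (by omega)⟩
  exact List.Perm.eq_of_pairwise'
    (List.Pairwise.sublist (List.filter_sublist (l := L)) (aux_pairwise_indexOf hL)) hsort hperm


/-- The size of a maximum agreement subtree of two trees on `[n]`. -/
noncomputable def mastP (n : ℕ) (t₁ t₂ : RTree (Fin n)) : ℕ :=
  sSup {k | ∃ S : Finset (Fin n), S.card = k ∧
    OptIso (t₁.restrict S) (t₂.restrict S)}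

/-- If two rooted binary phylogenetic trees `T₁, T₂` on `[n]` both restrict to
rooted caterpillars `c₁, c₂` on a common leaf subset `S'`, then
`MAST(T₁,T₂)` is at least the length of any increasing subsequence of the
permutation of `S'` obtained by reading the leaf order of `T₂|S'` relative to
the leaf order of `T₁|S'` — in particular at least the length of the longest
such subsequence. -/
theorem mast_ge_lis (n : ℕ) (T₁ T₂ : RTree (Fin n))
    (hT₁ : T₁.labels = (Finset.univ : Finset (Fin n)).val)
    (hT₂ : T₂.labels = (Finset.univ : Finset (Fin n)).val)
    (S' : Finset (Fin n)) (c₁ c₂ : RTree (Fin n))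
    (h₁ : T₁.restrict S' = some c₁) (h₂ : T₂.restrict S' = some c₂)
    (hc₁ : c₁.IsCaterpillar) (hc₂ : c₂.IsCaterpillar)
    (u : List (Fin n)) (hu : u.Sublist c₂.spineList)
    (hinc : u.Chain' fun x y =>
      c₁.spineList.idxOf x < c₁.spineList.idxOf y) :
    u.length ≤ mastP n T₁ T₂ := by
  by_cases hu0 : u = []
  · simp [hu0]
  have key : ∀ (T c : RTree (Fin n)), T.labels = (Finset.univ : Finset (Fin n)).val →
      T.restrict S' = some c → c.labels = S'.val := by
    intro T c hT h
    rw [(RTree.restrict_spec S' T).2 c h, hT]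
    have hfv : (Finset.univ.filter (· ∈ S')).val = S'.val := by
      congr 1; ext x; simp
    rw [← hfv, Finset.filter_val]
  have hl₁ := key T₁ c₁ hT₁ h₁
  have hl₂ := key T₂ c₂ hT₂ h₂
  have hsp₁ : (↑c₁.spineList : Multiset (Fin n)) = S'.val := (RTree.spine_coe hc₁).trans hl₁
  have hsp₂ : (↑c₂.spineList : Multiset (Fin n)) = S'.val := (RTree.spine_coe hc₂).trans hl₂
  have hnd₁ : c₁.spineList.Nodup := by
    have := S'.nodup; rw [← hsp₁] at this; exact this
  have hnd₂ : c₂.spineList.Nodup := by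
    have := S'.nodup; rw [← hsp₂] at this; exact this
  have hmem₁ : ∀ x, x ∈ c₁.spineList ↔ x ∈ S' := by
    intro x; rw [← Multiset.mem_coe, hsp₁, Finset.mem_val]
  have hmem₂ : ∀ x, x ∈ c₂.spineList ↔ x ∈ S' := by
    intro x; rw [← Multiset.mem_coe, hsp₂, Finset.mem_val]
  haveI : IsTrans (Fin n)
      (fun x y => c₁.spineList.idxOf x < c₁.spineList.idxOf y) :=
    ⟨fun _ _ _ => Nat.lt_trans⟩
  have hpu₁ : u.Pairwise
      (fun x y => c₁.spineList.idxOf x < c₁.spineList.idxOf y) :=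
    List.isChain_iff_pairwise.mp hinc
  have hund : u.Nodup := by
    refine hpu₁.imp ?_
    intro a b h e
    subst e
    exact absurd h (lt_irrefl _)
  have husub : ∀ x ∈ u, x ∈ S' := fun x hx => (hmem₂ x).mp (hu.subset hx)
  have F₂ : c₂.spineList.filter (· ∈ u.toFinset) = u :=
    aux_filter_eq hnd₂ hund (fun x hx => hu.subset hx)
      (List.Pairwise.sublist hu (aux_pairwise_indexOf hnd₂))
  have F₁ : c₁.spineList.filter (· ∈ u.toFinset) = u :=
    aux_filter_eq hnd₁ hund (fun x hx => (hmem₁ x).mpr (husub x hx)) hpu₁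
  set S : Finset (Fin n) := u.toFinset with hS
  have hSS' : S ⊆ S' := fun x hx => husub x (List.mem_toFinset.mp hx)
  have hb₁ : T₁.restrict S = c₁.restrict S := by
    rw [← RTree.restrict_restrict hSS' T₁, h₁, Option.bind_some]
  have hb₂ : T₂.restrict S = c₂.restrict S := by
    rw [← RTree.restrict_restrict hSS' T₂, h₂, Option.bind_some]
  obtain ⟨d₁, hd₁⟩ : ∃ d, c₁.restrict S = some d := by
    cases hr : c₁.restrict S with
    | none =>
      have := (RTree.restrict_cat S hc₁).1 hr
      rw [F₁] at this; exact absurd this hu0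
    | some d => exact ⟨d, rfl⟩
  obtain ⟨d₂, hd₂⟩ : ∃ d, c₂.restrict S = some d := by
    cases hr : c₂.restrict S with
    | none =>
      have := (RTree.restrict_cat S hc₂).1 hr
      rw [F₂] at this; exact absurd this hu0
    | some d => exact ⟨d, rfl⟩
  obtain ⟨e₁, hiso₁, hcat₁, hspe₁⟩ := (RTree.restrict_cat S hc₁).2 d₁ hd₁
  obtain ⟨e₂, hiso₂, hcat₂, hspe₂⟩ := (RTree.restrict_cat S hc₂).2 d₂ hd₂
  have hee : RTree.Iso e₁ e₂ :=
    RTree.iso_of_spineList_eq hcat₁ hcat₂ (by rw [hspe₁, hspe₂, F₁, F₂])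
  have hdd : RTree.Iso d₁ d₂ := (hiso₁.trans' hee).trans' hiso₂.symm'
  have hopt : OptIso (T₁.restrict S) (T₂.restrict S) := by
    rw [hb₁, hb₂, hd₁, hd₂]; exact hdd
  have hcard : S.card = u.length := List.toFinset_card_of_nodup hund
  have hbdd : BddAbove {k | ∃ S : Finset (Fin n), S.card = k ∧
      OptIso (T₁.restrict S) (T₂.restrict S)} := by
    refine ⟨n, fun k hk => ?_⟩
    obtain ⟨S, rfl, -⟩ := hk
    simpa using S.card_le_univ
  exact le_csSup hbdd ⟨S, hcard, hopt⟩
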